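/- Let f : X → X be a continuous map of a compact metric space and Λ a closed f-invariant set such that f restricted to Λ is chain transitive; let S be a closed set with Λ ⊆ S and f(S) ⊆ S, and suppose f has shadowing on B_b(S) for some b > 0. If there exist x ∈ Λ and y ∈ X \ S with x → y, then Λ ⊆ ∂S. -/
import Mathlib


open Metric Filter Topology Set

variable {X : Type*}

/-- `(c i)_{i=0}^k` is a `δ`-chain of `f` (up to index `k`). -/
def IsDeltaChain [MetricSpace X] (f : X → X) (δ : ℝ) (k : ℕ) (c : ℕ → X) : Prop :=
  ∀ i < k, dist (f (c i)) (c (i + 1)) ≤ δ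

/-- `x → y` : for every `δ > 0` there is a `δ`-chain from `x` to `y`. -/
def ChainReach [MetricSpace X] (f : X → X) (x y : X) : Prop :=
  ∀ δ > 0, ∃ k ≥ 1, ∃ c : ℕ → X, c 0 = x ∧ c k = y ∧ IsDeltaChain f δ k c

/-- The chain recurrent set. -/
def ChainRec [MetricSpace X] (f : X → X) : Set X := {x | ChainReach f x x}

/-- `C` is a chain component of `f`. -/
def IsChainComponent [MetricSpace X] (f : X → X) (C : Set X) : Prop :=
  ∃ x, ChainReach f x x ∧
    C = {y | ChainReach f y y ∧ ChainReach f x y ∧ ChainReach f y x}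

/-- A set is chain stable iff points chain-reachable from it stay in it. -/
def ChainStable [MetricSpace X] (f : X → X) (S : Set X) : Prop :=
  ∀ x ∈ S, ∀ y, ChainReach f x y → y ∈ S

/-- `S` is "initially stable": if `y → x` with `x ∈ S` then `y ∈ S`. -/
def InitialStable [MetricSpace X] (f : X → X) (S : Set X) : Prop :=
  ∀ x ∈ S, ∀ y, ChainReach f y x → y ∈ S

/-- `f` restricted to `Λ` is chain transitive. -/
def ChainTransitiveOn [MetricSpace X] (f : X → X) (Λ : Set X) : Prop :=
  ∀ p ∈ Λ, ∀ q ∈ Λ, ∀ δ > 0, ∃ k ≥ 1, ∃ c : ℕ → X,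
    c 0 = p ∧ c k = q ∧ (∀ i ≤ k, c i ∈ Λ) ∧ IsDeltaChain f δ k c

/-- `f` has shadowing on `S`. -/
def ShadowsOn [MetricSpace X] (f : X → X) (S : Set X) : Prop :=
  ∀ ε > 0, ∃ δ > 0, ∀ (k : ℕ) (c : ℕ → X), (∀ i ≤ k, c i ∈ S) →
    IsDeltaChain f δ k c → ∃ x, ∀ i ≤ k, dist (c i) (f^[i] x) ≤ ε

/-- Iterate of a homeomorphism indexed by `ℤ`. -/
def hIter [TopologicalSpace X] (f : X ≃ₜ X) (i : ℤ) : X → X :=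
  if 0 ≤ i then (⇑f)^[i.toNat] else (⇑f.symm)^[(-i).toNat]

/-- A `δ`-limit-pseudo orbit of the homeomorphism `f`. -/
def IsLimitPseudoOrbit [MetricSpace X] (f : X ≃ₜ X) (δ : ℝ) (ξ : ℤ → X) : Prop :=
  (∀ i : ℤ, dist (f (ξ i)) (ξ (i + 1)) ≤ δ) ∧
  Tendsto (fun i : ℤ => dist (f (ξ i)) (ξ (i + 1))) atBot (nhds 0) ∧
  Tendsto (fun i : ℤ => dist (f (ξ i)) (ξ (i + 1))) atTop (nhds 0)

/-- `f` has L-shadowing on `S`. -/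
def LShadowsOn [MetricSpace X] (f : X ≃ₜ X) (S : Set X) : Prop :=
  ∀ ε > 0, ∃ δ > 0, ∀ ξ : ℤ → X, (∀ i : ℤ, ξ i ∈ S) →
    IsLimitPseudoOrbit f δ ξ →
    ∃ x : X, (∀ i : ℤ, dist (ξ i) (hIter f i x) ≤ ε) ∧
      Tendsto (fun i : ℤ => dist (ξ i) (hIter f i x)) atBot (nhds 0) ∧
      Tendsto (fun i : ℤ => dist (ξ i) (hIter f i x)) atTop (nhds 0)

/-- `f` is expansive on `S`. -/
def ExpansiveOn [MetricSpace X] (f : X ≃ₜ X) (S : Set X) : Prop :=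
  ∃ e > 0, ∀ x y : X, (∀ i : ℤ, hIter f i x ∈ S) → (∀ i : ℤ, hIter f i y ∈ S) →
    (∀ i : ℤ, dist (hIter f i x) (hIter f i y) ≤ e) → x = y

/-- Closed `b`-neighborhood of `S`. -/
def Nbhd [MetricSpace X] (b : ℝ) (S : Set X) : Set X := {x | Metric.infDist x S ≤ b}

/-- Attractor for a continuous map `f`. -/
def IsAttractor [TopologicalSpace X] (f : X → X) (Λ : Set X) : Prop :=
  IsClosed Λ ∧ f '' Λ = Λ ∧
    ∃ U : Set X, IsOpen U ∧ f '' closure U ⊆ U ∧ Λ = ⋂ i : ℕ, f^[i] '' U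

/-- `f` is (topologically) mixing. -/
def IsMixing [TopologicalSpace X] (f : X → X) : Prop :=
  ∀ U V : Set X, IsOpen U → IsOpen V → U.Nonempty → V.Nonempty →
    ∃ j : ℕ, ∀ i ≥ j, (f^[i] '' U ∩ V).Nonempty

/-- The ω-limit set of `x` under `f`. -/
def OmegaSet [TopologicalSpace X] (f : X → X) (x : X) : Set X :=
  {y | ∃ φ : ℕ → ℕ, StrictMono φ ∧ Tendsto (fun j => f^[φ j] x) atTop (nhds y)}

/-- `M` is a minimal set for `f`. -/
def IsMinimalSet [TopologicalSpace X] (f : X → X) (M : Set X) : Prop :=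
  M.Nonempty ∧ IsClosed M ∧ f '' M ⊆ M ∧ ∀ x ∈ M, OmegaSet f x = M

theorem stmt5 [MetricSpace X] [CompactSpace X] (f : X → X) (hf : Continuous f)
    (Λ : Set X) (hΛc : IsClosed Λ) (hΛinv : f '' Λ ⊆ Λ)
    (hct : ChainTransitiveOn f Λ)
    (S : Set X) (hSc : IsClosed S) (hΛS : Λ ⊆ S) (hSinv : f '' S ⊆ S)
    (b : ℝ) (hb : 0 < b) (hsh : ShadowsOn f (Nbhd b S))
    (x y : X) (hx : x ∈ Λ) (hy : y ∉ S) (hxy : ChainReach f x y) :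
    Λ ⊆ frontier S := by
  classical
  intro p hp
  rw [hSc.frontier_eq]
  refine ⟨hΛS hp, fun hpint => ?_⟩
  have hSne : S.Nonempty := ⟨x, hΛS hx⟩
  have horb : ∀ z ∈ S, ∀ i, f^[i] z ∈ S := by
    intro z hz i
    induction i with
    | zero => exact hz
    | succ n ih =>
      rw [Function.iterate_succ_apply']
      exact hSinv ⟨_, ih, rfl⟩
  have hd0 : 0 < Metric.infDist y S := by
    by_contra h
    push_neg at h
    have : Metric.infDist y S = 0 := le_antisymm h (Metric.infDist_nonneg)
    have : y ∈ closure S := by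
      rw [Metric.mem_closure_iff_infDist_zero hSne]; exact this
    exact hy (hSc.closure_eq ▸ this)
  obtain ⟨r, hr, hrS⟩ : ∃ r > 0, Metric.ball p r ⊆ S := by
    rcases Metric.mem_nhds_iff.1 (mem_interior_iff_mem_nhds.1 hpint) with ⟨r, hr, h⟩
    exact ⟨r, hr, h⟩
  obtain ⟨η, hη, hηf⟩ : ∃ η > 0, ∀ a c : X, dist a c < η → dist (f a) (f c) < b / 2 :=
    Metric.uniformContinuous_iff.1 (CompactSpace.uniformContinuous_of_continuous hf)
      (b / 2) (by linarith)
  set ε : ℝ := min (min (r / 2) (Metric.infDist y S / 2)) (min (b / 2) (η / 2)) with hεdef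
  have hε : 0 < ε := by
    apply lt_min (lt_min (by linarith) (by linarith)) (lt_min (by linarith) (by linarith))
  have hεr : ε < r := lt_of_le_of_lt ((min_le_left _ _).trans (min_le_left _ _)) (by linarith)
  have hεy : ε < Metric.infDist y S :=
    lt_of_le_of_lt ((min_le_left _ _).trans (min_le_right _ _)) (by linarith)
  have hεη : ε < η := lt_of_le_of_lt ((min_le_right _ _).trans (min_le_right _ _)) (by linarith)
  obtain ⟨δ0, hδ0, hδsh⟩ := hsh ε hε
  set δ : ℝ := min δ0 (b / 2) with hδdef
  have hδ : 0 < δ := lt_min hδ0 (by linarith)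
  obtain ⟨k1, hk1, c1, hc10, hc1k, hc1Λ, hc1chain⟩ := hct p hp x hx δ hδ
  obtain ⟨k2, hk2, c2, hc20, hc2k, hc2chain⟩ := hxy δ hδ
  set N : ℕ := k1 + k2 with hNdef
  set c : ℕ → X := fun i => if i < k1 then c1 i else c2 (i - k1) with hcdef
  have hc0 : c 0 = p := by
    simp only [hcdef]
    rw [if_pos (by omega)]
    exact hc10
  have hcN : c N = y := by
    simp only [hcdef, hNdef]
    rw [if_neg (by omega)]
    simpa using hc2k
  have hcsucc : ∀ i < N, c (i + 1) = if i + 1 ≤ k1 then c1 (i + 1) else c2 (i + 1 - k1) := by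
    intro i hi
    simp only [hcdef]
    by_cases h : i + 1 < k1
    · rw [if_pos h, if_pos (by omega)]
    · rw [if_neg h]
      by_cases h2 : i + 1 = k1
      · rw [if_pos (by omega)]
        have : i + 1 - k1 = 0 := by omega
        rw [this, hc20, h2, hc1k]
      · rw [if_neg (by omega)]
  have hchain : IsDeltaChain f δ N c := by
    intro i hi
    rw [hcsucc i hi]
    by_cases h : i + 1 ≤ k1
    · rw [if_pos h]
      have hci : c i = c1 i := by simp only [hcdef]; rw [if_pos (by omega)]
      rw [hci]
      exact hc1chain i (by omega)
    · rw [if_neg h]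
      have hci : c i = c2 (i - k1) := by simp only [hcdef]; rw [if_neg (by omega)]
      rw [hci]
      have h1 : i + 1 - k1 = i - k1 + 1 := by omega
      rw [h1]
      exact hc2chain (i - k1) (by omega)
  have hchain0 : IsDeltaChain f δ0 N c := fun i hi =>
    (hchain i hi).trans (min_le_left _ _)
  by_cases hall : ∀ i ≤ N, c i ∈ Nbhd b S
  · obtain ⟨z, hz⟩ := hδsh N c hall hchain0
    have hz0 : dist p z ≤ ε := by
      have := hz 0 (Nat.zero_le _)
      rwa [hc0, Function.iterate_zero_apply] at this
    have hzS : z ∈ S := hrS (by rw [Metric.mem_ball, dist_comm]; exact lt_of_le_of_lt hz0 hεr)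
    have hzN : f^[N] z ∈ S := horb z hzS N
    have : Metric.infDist y S ≤ dist y (f^[N] z) := Metric.infDist_le_dist_of_mem hzN
    have h2 := hz N le_rfl
    rw [hcN] at h2
    linarith [lt_of_le_of_lt (this.trans h2) hεy]
  · push_neg at hall
    have hex : ∃ n, n ≤ N ∧ c n ∉ Nbhd b S := hall
    set m := Nat.find hex with hmdef
    obtain ⟨hmN, hmout⟩ := Nat.find_spec hex
    have hmin : ∀ i < m, i ≤ N → c i ∈ Nbhd b S := by
      intro i hi hiN
      by_contra h
      exact Nat.find_min hex hi ⟨hiN, h⟩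
    have hm1 : 1 ≤ m := by
      rcases Nat.eq_zero_or_pos m with h | h
      · exfalso
        apply hmout
        rw [← hmdef, h, hc0]
        show Metric.infDist p S ≤ b
        have : Metric.infDist p S = 0 := by
          rw [← Metric.mem_closure_iff_infDist_zero hSne, hSc.closure_eq]
          exact hΛS hp
        linarith
      · exact h
    obtain ⟨z, hz⟩ := hδsh (m - 1) c
      (fun i hi => hmin i (by omega) (by omega))
      (fun i hi => hchain0 i (by omega))
    have hz0 : dist p z ≤ ε := by
      have := hz 0 (Nat.zero_le _)
      rwa [hc0, Function.iterate_zero_apply] at this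
    have hzS : z ∈ S := hrS (by rw [Metric.mem_ball, dist_comm]; exact lt_of_le_of_lt hz0 hεr)
    have hzm1 : f^[m - 1] z ∈ S := horb z hzS _
    have hclose : dist (c (m - 1)) (f^[m - 1] z) ≤ ε := hz (m - 1) le_rfl
    have hfclose : dist (f (c (m - 1))) (f (f^[m - 1] z)) < b / 2 :=
      hηf _ _ (lt_of_le_of_lt hclose hεη)
    have hstep : dist (f (c (m - 1))) (c m) ≤ δ := by
      have := hchain (m - 1) (by omega)
      rwa [Nat.sub_add_cancel hm1] at this
    have hzmS : f (f^[m - 1] z) ∈ S := hSinv ⟨_, hzm1, rfl⟩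
    apply hmout
    show Metric.infDist (c m) S ≤ b
    calc Metric.infDist (c m) S ≤ dist (c m) (f (f^[m - 1] z)) :=
          Metric.infDist_le_dist_of_mem hzmS
      _ ≤ dist (c m) (f (c (m - 1))) + dist (f (c (m - 1))) (f (f^[m - 1] z)) :=
          dist_triangle _ _ _
      _ ≤ δ + b / 2 := by
          rw [dist_comm]
          exact add_le_add hstep hfclose.le
      _ ≤ b / 2 + b / 2 := by
          have : δ ≤ b / 2 := min_le_right _ _
          linarith
      _ = b := by ring
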